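/- (Noise Alignment for Qualified Component) Let G be a non-degenerate CDS instance and consider a CDS scheme for G over F_p with parameters (L, L_Z, N) where N = L (rate 1/2). Then for every qualified component Q of G containing at least two vertices, with vertex set V_Q, and for every nonempty subset V_q ⊆ V_Q, the conditional entropy of the tuple of signals of the vertices in V_q given the secret satisfies H(V_q | S) = H(V_Q | S) = L in p-ary units. -/

import Mathlib

open scoped BigOperators

/-- Probability that the random variable `X`, defined on a finite sample space `Ω`
equipped with the uniform distribution, takes the value `a`. -/
noncomputable def prb {Ω α : Type*} [Fintype Ω] (X : Ω → α) (a : α) : ℝ :=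
  (Nat.card {ω : Ω // X ω = a} : ℝ) / (Fintype.card Ω : ℝ)

/-- Shannon entropy, in `p`-ary units (logarithm base `p`), of the random variable `X`
defined on a finite sample space `Ω` equipped with the uniform distribution. -/
noncomputable def entp (p : ℕ) {Ω α : Type*} [Fintype Ω] [Fintype α] (X : Ω → α) : ℝ :=
  ∑ a : α, -(prb X a * Real.logb p (prb X a))

/-- Correctness of a CDS scheme `φ`: for every qualified edge `{v,u}`, the secret is
determined by the pair of signals. -/
def CDSCorrect {V : Type*} (Q : SimpleGraph V) {p L LZ N : ℕ}
    (φ : V → (Fin L → ZMod p) → (Fin LZ → ZMod p) → (Fin N → ZMod p)) : Prop :=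
  ∀ v u : V, Q.Adj v u →
    ∃ g : (Fin N → ZMod p) → (Fin N → ZMod p) → (Fin L → ZMod p),
      ∀ s z, g (φ v s z) (φ u s z) = s

/-- Security of a CDS scheme `φ`: for every unqualified edge `{v,u}`, the pair of signals
is statistically independent of the (uniform) secret. -/
def CDSSecure {V : Type*} (U : SimpleGraph V) {p L LZ N : ℕ}
    (φ : V → (Fin L → ZMod p) → (Fin LZ → ZMod p) → (Fin N → ZMod p)) : Prop :=
  ∀ v u : V, U.Adj v u → ∀ (s₁ s₂ : Fin L → ZMod p) (a b : Fin N → ZMod p),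
    Nat.card {z : Fin LZ → ZMod p // φ v s₁ z = a ∧ φ u s₁ z = b} =
    Nat.card {z : Fin LZ → ZMod p // φ v s₂ z = a ∧ φ u s₂ z = b}

section AuxiliaryLemmas

open Finset in
/-- The fiber counts of a map on a finite type sum to the cardinality of the domain. -/
theorem sum_card_fibers' {Ω α : Type*} [Fintype Ω] [Fintype α] (X : Ω → α) :
    ∑ a : α, Nat.card {ω : Ω // X ω = a} = Fintype.card Ω := by
  classical
  have : ∀ a, Nat.card {ω : Ω // X ω = a} = (univ.filter (fun ω => X ω = a)).card := by
    intro a; rw [Nat.card_eq_fintype_card, Fintype.card_subtype]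
  simp_rw [this]
  rw [← Finset.card_eq_sum_card_fiberwise (f := X) (t := univ) (fun x _ => mem_univ _), card_univ]

/-- The probabilities of a random variable sum to `1`. -/
theorem sum_prb' {Ω α : Type*} [Fintype Ω] [Nonempty Ω] [Fintype α] (X : Ω → α) :
    ∑ a : α, prb X a = 1 := by
  unfold prb
  rw [← Finset.sum_div]
  rw [show ∑ a : α, (Nat.card {ω : Ω // X ω = a} : ℝ)
      = ((∑ a : α, Nat.card {ω : Ω // X ω = a} : ℕ) : ℝ) by push_cast; ring]
  rw [sum_card_fibers']
  have : (Fintype.card Ω : ℝ) ≠ 0 := by simp [Fintype.card_ne_zero]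
  field_simp

/-- Entropy of a random variable all of whose outcome probabilities are `0` or `c`. -/
theorem entp_const' {Ω α : Type*} [Fintype Ω] [Nonempty Ω] [Fintype α] (p : ℕ) (X : Ω → α)
    (c : ℝ) (hc : ∀ a, prb X a = 0 ∨ prb X a = c) : entp p X = -Real.logb p c := by
  unfold entp
  have : ∀ a : α, -(prb X a * Real.logb p (prb X a)) = prb X a * (-Real.logb p c) := by
    intro a
    rcases hc a with h | h <;> rw [h] <;> ring
  rw [Finset.sum_congr rfl (fun a _ => this a), ← Finset.sum_mul, sum_prb', one_mul]

open Classical Finset in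
/-- Marginal counts from joint counts: if the joint fiber counts of `(f,h)` do not depend
on the secret, neither do the fiber counts of `f`. -/
theorem marginal_of_joint' {p L LZ : ℕ} [NeZero p]
    (f h : (Fin L → ZMod p) → (Fin LZ → ZMod p) → (Fin L → ZMod p))
    (hsec : ∀ s₁ s₂ a b, Nat.card {z // f s₁ z = a ∧ h s₁ z = b} =
      Nat.card {z // f s₂ z = a ∧ h s₂ z = b}) :
    ∀ s₁ s₂ a, Nat.card {z // f s₁ z = a} = Nat.card {z // f s₂ z = a} := by
  have key : ∀ s a, Nat.card {z // f s z = a} = ∑ b, Nat.card {z // f s z = a ∧ h s z = b} := by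
    intro s a
    rw [Nat.card_eq_fintype_card, Fintype.card_subtype,
      Finset.card_eq_sum_card_fiberwise (f := fun z => h s z) (t := univ)
        (fun x _ => mem_univ _)]
    refine Finset.sum_congr rfl fun b _ => ?_
    rw [Nat.card_eq_fintype_card, Fintype.card_subtype, Finset.filter_filter]
  intro s₁ s₂ a
  rw [key, key]
  exact Finset.sum_congr rfl fun b _ => hsec s₁ s₂ a b

open Classical Finset in
/-- Core counting lemma for a qualified edge whose endpoints both have secret-independent
marginals: the signal of each endpoint is uniform on the full space, and the signal of one
endpoint determines that of the other (given the secret). -/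
theorem key_edge' {p L LZ : ℕ} [NeZero p]
    (f g : (Fin L → ZMod p) → (Fin LZ → ZMod p) → (Fin L → ZMod p))
    (hf : ∀ s₁ s₂ a, Nat.card {z // f s₁ z = a} = Nat.card {z // f s₂ z = a})
    (hg : ∀ s₁ s₂ b, Nat.card {z // g s₁ z = b} = Nat.card {z // g s₂ z = b})
    (dec : (Fin L → ZMod p) → (Fin L → ZMod p) → (Fin L → ZMod p))
    (hdec : ∀ s z, dec (f s z) (g s z) = s) :
    (∀ s b, Nat.card {z // g s z = b} * p ^ L = p ^ LZ) ∧
    (∀ s z z', f s z = f s z' → g s z = g s z') := by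
  have cardS : Fintype.card (Fin L → ZMod p) = p ^ L := by
    simp [Fintype.card_fun, ZMod.card]
  have cardZ : Fintype.card (Fin LZ → ZMod p) = p ^ LZ := by
    simp [Fintype.card_fun, ZMod.card]
  let n : _ → _ → _ → ℕ := fun s a b => (univ.filter (fun z => f s z = a ∧ g s z = b)).card
  let cf : _ → _ → ℕ := fun s a => (univ.filter (fun z : Fin LZ → ZMod p => f s z = a)).card
  let cg : _ → _ → ℕ := fun s b => (univ.filter (fun z : Fin LZ → ZMod p => g s z = b)).card
  have natcf : ∀ s a, Nat.card {z // f s z = a} = cf s a := by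
    intro s a; rw [Nat.card_eq_fintype_card, Fintype.card_subtype]
  have natcg : ∀ s b, Nat.card {z // g s z = b} = cg s b := by
    intro s b; rw [Nat.card_eq_fintype_card, Fintype.card_subtype]
  have hf' : ∀ s₁ s₂ a, cf s₁ a = cf s₂ a := by
    intro s₁ s₂ a; rw [← natcf, ← natcf]; exact hf s₁ s₂ a
  have hg' : ∀ s₁ s₂ b, cg s₁ b = cg s₂ b := by
    intro s₁ s₂ b; rw [← natcg, ← natcg]; exact hg s₁ s₂ b
  obtain ⟨s₀⟩ : Nonempty (Fin L → ZMod p) := inferInstance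
  have hsum_a : ∀ s b, ∑ a, n s a b = cg s b := by
    intro s b
    show _ = (univ.filter (fun z => g s z = b)).card
    rw [Finset.card_eq_sum_card_fiberwise (f := fun z => f s z) (t := univ)
      (fun x _ => mem_univ _)]
    refine Finset.sum_congr rfl fun a _ => ?_
    rw [Finset.filter_filter]
    exact congrArg Finset.card (Finset.filter_congr (fun z _ => by
      constructor <;> (intro h; tauto)))
  have hsumcf : ∀ s, ∑ a, cf s a = p ^ LZ := by
    intro s
    rw [show ∑ a, cf s a
        = ∑ a, ((univ : Finset (Fin LZ → ZMod p)).filter (fun z => f s z = a)).card from rfl,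
      ← Finset.card_eq_sum_card_fiberwise (f := fun z => f s z) (t := univ)
        (fun x _ => mem_univ _), card_univ, cardZ]
  have hsumcg : ∀ s, ∑ b, cg s b = p ^ LZ := by
    intro s
    rw [show ∑ b, cg s b
        = ∑ b, ((univ : Finset (Fin LZ → ZMod p)).filter (fun z => g s z = b)).card from rfl,
      ← Finset.card_eq_sum_card_fiberwise (f := fun z => g s z) (t := univ)
        (fun x _ => mem_univ _), card_univ, cardZ]
  have hle : ∀ s a b, n s a b ≤ cf s a := by
    intro s a b
    apply Finset.card_le_card
    intro z hz
    simp only [mem_filter, mem_univ, true_and] at hz ⊢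
    exact hz.1
  have hdecu : ∀ s a b, n s a b ≠ 0 → dec a b = s := by
    intro s a b hne
    obtain ⟨z, hz⟩ := Finset.card_ne_zero.mp hne
    simp only [mem_filter, mem_univ, true_and] at hz
    rw [← hz.1, ← hz.2]; exact hdec s z
  have hsingle : ∀ a b, ∑ s, n s a b = n (dec a b) a b := by
    intro a b
    apply Finset.sum_eq_single
    · intro s _ hs
      by_contra h
      exact hs ((hdecu s a b h).symm)
    · intro h; exact absurd (mem_univ _) h
  have hchain : ∀ b, p ^ L * cg s₀ b = ∑ a, n (dec a b) a b := by
    intro b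
    calc p ^ L * cg s₀ b = ∑ s : Fin L → ZMod p, cg s b := by
          rw [Finset.sum_congr rfl (fun s _ => hg' s s₀ b), Finset.sum_const, card_univ, cardS,
            smul_eq_mul]
      _ = ∑ s : Fin L → ZMod p, ∑ a, n s a b := by
          rw [Finset.sum_congr rfl (fun s _ => (hsum_a s b).symm)]
      _ = ∑ a, ∑ s, n s a b := Finset.sum_comm
      _ = ∑ a, n (dec a b) a b := Finset.sum_congr rfl (fun a _ => hsingle a b)
  have hlesum : ∀ b, ∑ a, n (dec a b) a b ≤ ∑ a, cf s₀ a :=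
    fun b => Finset.sum_le_sum (fun a _ => (hle _ a b).trans (le_of_eq (hf' _ s₀ a)))
  have h1 : ∀ b, p ^ L * cg s₀ b ≤ p ^ LZ := by
    intro b
    rw [hchain b]
    exact (hlesum b).trans (le_of_eq (hsumcf s₀))
  have h2 : ∀ b, p ^ L * cg s₀ b = p ^ LZ := by
    have hsum : ∑ b : Fin L → ZMod p, p ^ L * cg s₀ b = ∑ b : Fin L → ZMod p, p ^ LZ := by
      rw [← Finset.mul_sum, hsumcg s₀, Finset.sum_const, card_univ, cardS, smul_eq_mul, mul_comm]
    intro b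
    exact (Finset.sum_eq_sum_iff_of_le (fun b _ => h1 b)).mp hsum b (mem_univ b)
  have h3 : ∀ a b, n (dec a b) a b = cf s₀ a := by
    intro a b
    have : ∑ a, n (dec a b) a b = ∑ a, cf s₀ a := by
      rw [← hchain b, h2 b, hsumcf s₀]
    exact (Finset.sum_eq_sum_iff_of_le (fun a _ => (hle _ a b).trans (le_of_eq (hf' _ s₀ a)))).mp
      this a (mem_univ a)
  constructor
  · intro s b
    rw [natcg, hg' s s₀ b, mul_comm]
    exact h2 b
  · intro s z z' hzz'
    have hzmem : z ∈ univ.filter (fun z' => f s z' = f s z ∧ g s z' = g s z) := by simp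
    have hnz : n s (f s z) (g s z) ≠ 0 := Finset.card_ne_zero_of_mem hzmem
    have hds : dec (f s z) (g s z) = s := hdecu _ _ _ hnz
    have hcard : n s (f s z) (g s z) = cf s (f s z) := by
      have := h3 (f s z) (g s z)
      rw [hds] at this
      rw [this]
      exact hf' s₀ s _
    have hsub : univ.filter (fun z' => f s z' = f s z ∧ g s z' = g s z) ⊆
        univ.filter (fun z' => f s z' = f s z) := by
      intro x hx
      simp only [mem_filter, mem_univ, true_and] at hx ⊢
      exact hx.1
    have heq := Finset.eq_of_subset_of_card_le hsub (le_of_eq hcard.symm)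
    have hz' : z' ∈ univ.filter (fun z'' => f s z'' = f s z) := by simp [hzz'.symm]
    rw [← heq] at hz'
    simp only [mem_filter, mem_univ, true_and] at hz'
    exact hz'.2.symm

open Classical in
/-- If a tuple of random variables is determined by its `x₀`-coordinate, whose fibers all
have size `m`, then every fiber of the tuple has size `0` or `m`. -/
theorem tuple_fiber' {Zt α ι : Type*} [Fintype Zt] (F : ι → Zt → α) (x₀ : ι) (m : ℕ)
    (hali : ∀ (x : ι) z z', F x₀ z = F x₀ z' → F x z = F x z')
    (hcnt : ∀ a, Nat.card {z // F x₀ z = a} = m) (t : ι → α) :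
    Nat.card {z // (fun x => F x z) = t} = 0 ∨ Nat.card {z // (fun x => F x z) = t} = m := by
  by_cases h : ∃ z₀, (fun x => F x z₀) = t
  · right
    obtain ⟨z₀, hz₀⟩ := h
    have hiff : ∀ z, (fun x => F x z) = t ↔ F x₀ z = F x₀ z₀ := by
      intro z
      constructor
      · intro hz
        rw [show F x₀ z = (fun x => F x z) x₀ from rfl, hz, ← hz₀]
      · intro hz
        funext x
        rw [hali x z z₀ hz]
        exact congrFun hz₀ x
    rw [Nat.card_congr (Equiv.subtypeEquivRight hiff), hcnt]
  · left
    push_neg at h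
    have : IsEmpty {z // (fun x => F x z) = t} := ⟨fun w => h w.1 w.2⟩
    exact Nat.card_of_isEmpty

/-- Counting fibers of a pair `(X, S)` reduces to counting conditional fibers. -/
theorem card_pair' {S Zt α : Type*} (G : S → Zt → α) (s : S) (t : α) :
    Nat.card {ω : S × Zt // (G ω.1 ω.2, ω.1) = (t, s)} = Nat.card {z : Zt // G s z = t} := by
  have hiff : ∀ ω : S × Zt, (G ω.1 ω.2, ω.1) = (t, s) ↔ ω.1 = s ∧ G s ω.2 = t := by
    intro ω
    constructor
    · intro h
      have h1 : G ω.1 ω.2 = t := congrArg Prod.fst h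
      have h2 : ω.1 = s := congrArg Prod.snd h
      exact ⟨h2, by rw [← h2]; exact h1⟩
    · rintro ⟨h1, h2⟩
      rw [Prod.ext_iff]
      exact ⟨by rw [h1]; exact h2, h1⟩
  rw [Nat.card_congr (Equiv.subtypeEquivRight hiff)]
  apply Nat.card_congr
  refine ⟨fun w => ⟨w.1.2, w.2.2⟩, fun z => ⟨(s, z.1), rfl, z.2⟩, fun w => ?_, fun z => rfl⟩
  apply Subtype.ext
  obtain ⟨⟨a, b⟩, h1, h2⟩ := w
  have h1' : a = s := h1
  simp only
  rw [h1']

end AuxiliaryLemmas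

/-- `entp` does not depend on the `Fintype` instance of the value type. -/
theorem entp_inst_irrel (p : ℕ) {Ω α : Type*} [Fintype Ω] (i1 i2 : Fintype α) (X : Ω → α) :
    @entp p Ω α _ i1 X = @entp p Ω α _ i2 X := by
  rw [Subsingleton.elim i1 i2]


open Classical in
/-- Noise Alignment for Qualified Component: For a non-degenerate CDS
instance `(Q, U)` and a CDS scheme over `F_p` with `N = L` (rate `1/2`), consider a
qualified component `C` of `Q` containing at least two vertices, with vertex set
`V_Q = {w | Q.connectedComponentMk w = C}`.  Then for every nonempty subset `V_q ⊆ V_Q`,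
the tuple of signals of the vertices of `V_q` satisfies
`H(V_q | S) = H(V_Q | S) = L` in `p`-ary units, where the sample space is the secret–noise
pair `(S, Z)` uniform on `F_p^L × F_p^{L_Z}` and `H(X | S) = H(X, S) − H(S)`. -/
theorem cds_noise_alignment_qualified_component {V : Type*} [Fintype V] [DecidableEq V]
    (Q U : SimpleGraph V)
    (p L LZ : ℕ) (hp : p.Prime) [NeZero p]
    (hdisj : ∀ v u : V, ¬ (Q.Adj v u ∧ U.Adj v u))
    (hnd : ∀ v : V, ∃ u : V, U.Adj v u)
    (φ : V → (Fin L → ZMod p) → (Fin LZ → ZMod p) → (Fin L → ZMod p))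
    (hcorr : CDSCorrect Q φ) (hsec : CDSSecure U φ)
    (C : Q.ConnectedComponent)
    (hC : ∃ v u : V, v ≠ u ∧ Q.connectedComponentMk v = C ∧ Q.connectedComponentMk u = C)
    (Vq : Finset V) (hne : Vq.Nonempty)
    (hsub : ∀ v ∈ Vq, Q.connectedComponentMk v = C) :
    entp p (fun ω : (Fin L → ZMod p) × (Fin LZ → ZMod p) =>
        ((fun x : {w : V // w ∈ Vq} => φ x.1 ω.1 ω.2), ω.1)) -
      entp p (fun ω : (Fin L → ZMod p) × (Fin LZ → ZMod p) => ω.1) = L ∧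
    entp p (fun ω : (Fin L → ZMod p) × (Fin LZ → ZMod p) =>
        ((fun x : {w : V // Q.connectedComponentMk w = C} => φ x.1 ω.1 ω.2), ω.1)) -
      entp p (fun ω : (Fin L → ZMod p) × (Fin LZ → ZMod p) => ω.1) = L := by
  classical
  have hp1 : 1 < p := hp.one_lt
  have hpne : ((p : ℝ)) ≠ 0 := Nat.cast_ne_zero.mpr (NeZero.ne p)
  have hppow : ∀ k : ℕ, ((p:ℝ) ^ k) ≠ 0 := fun k => pow_ne_zero k hpne
  -- marginal independence of every signal from the secret
  have hmargin : ∀ v : V, ∀ s₁ s₂ a,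
      Nat.card {z // φ v s₁ z = a} = Nat.card {z // φ v s₂ z = a} := by
    intro v
    obtain ⟨u, hu⟩ := hnd v
    exact marginal_of_joint' (φ v) (φ u) (fun s₁ s₂ a b => hsec v u hu s₁ s₂ a b)
  -- uniformity + alignment along qualified edges
  have hedge : ∀ v u : V, Q.Adj v u →
      (∀ s b, Nat.card {z // φ u s z = b} * p ^ L = p ^ LZ) ∧
      (∀ s z z', φ v s z = φ v s z' → φ u s z = φ u s z') := by
    intro v u hadj
    obtain ⟨dec, hdec⟩ := hcorr v u hadj
    exact key_edge' (φ v) (φ u) (hmargin v) (hmargin u) dec hdec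
  obtain ⟨v₀, hv₀Vq⟩ := hne
  have hv₀C : Q.connectedComponentMk v₀ = C := hsub v₀ hv₀Vq
  have hreach : ∀ w, Q.connectedComponentMk w = C → Q.Reachable v₀ w := by
    intro w hw
    exact SimpleGraph.ConnectedComponent.exact (by rw [hv₀C, hw])
  -- v₀ has a qualified neighbour
  have hadj₀ : ∃ u, Q.Adj v₀ u := by
    obtain ⟨v₁, v₂, h12, h1C, h2C⟩ := hC
    have hw : ∃ w, w ≠ v₀ ∧ Q.connectedComponentMk w = C := by
      by_cases h : v₁ = v₀
      · exact ⟨v₂, fun hh => h12 (by rw [h, hh]), h2C⟩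
      · exact ⟨v₁, h, h1C⟩
    obtain ⟨w, hwne, hwC⟩ := hw
    obtain ⟨W⟩ := hreach w hwC
    cases W with
    | nil => exact absurd rfl hwne
    | cons h _ => exact ⟨_, h⟩
  obtain ⟨u₀, hu₀⟩ := hadj₀
  have hcnt₀ : ∀ s a, Nat.card {z // φ v₀ s z = a} * p ^ L = p ^ LZ :=
    fun s a => (hedge u₀ v₀ hu₀.symm).1 s a
  -- alignment propagates along walks
  have hwalk : ∀ (x w : V) (W : Q.Walk x w),
      (∀ s z z', φ v₀ s z = φ v₀ s z' → φ x s z = φ x s z') →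
      (∀ s z z', φ v₀ s z = φ v₀ s z' → φ w s z = φ w s z') := by
    intro x w W
    induction W with
    | nil => exact id
    | cons h _ ih =>
      intro hx
      exact ih (fun s z z' hb => (hedge _ _ h).2 s z z' (hx s z z' hb))
  have halignC : ∀ w, Q.connectedComponentMk w = C →
      ∀ s z z', φ v₀ s z = φ v₀ s z' → φ w s z = φ w s z' := by
    intro w hw
    obtain ⟨W⟩ := hreach w hw
    exact hwalk v₀ w W (fun s z z' h => h)
  -- cardinalities
  have cardS : Fintype.card (Fin L → ZMod p) = p ^ L := by simp [ZMod.card]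
  have cardZ : Fintype.card (Fin LZ → ZMod p) = p ^ LZ := by simp [ZMod.card]
  have cardΩ : Fintype.card ((Fin L → ZMod p) × (Fin LZ → ZMod p)) = p ^ L * p ^ LZ := by
    rw [Fintype.card_prod, cardS, cardZ]
  have hlogb : ∀ k : ℕ, Real.logb p ((p:ℝ) ^ k) = k := by
    intro k
    rw [Real.logb_pow, Real.logb_self_eq_one (by exact_mod_cast hp1)]
    ring
  -- entropy of the secret
  have hSent : entp p (fun ω : (Fin L → ZMod p) × (Fin LZ → ZMod p) => ω.1) = (L : ℝ) := by
    rw [entp_const' p _ (((p:ℝ) ^ L)⁻¹) ?_]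
    · rw [Real.logb_inv, hlogb]; ring
    · intro s
      right
      have hcard : Nat.card {ω : (Fin L → ZMod p) × (Fin LZ → ZMod p) // ω.1 = s}
          = p ^ LZ := by
        have e : {ω : (Fin L → ZMod p) × (Fin LZ → ZMod p) // ω.1 = s}
            ≃ (Fin LZ → ZMod p) := by
          refine ⟨fun w => w.1.2, fun z => ⟨(s, z), rfl⟩, fun w => ?_, fun z => rfl⟩
          apply Subtype.ext
          obtain ⟨⟨a, b⟩, hw⟩ := w
          have ha : a = s := hw
          simp only
          rw [ha]
        rw [Nat.card_congr e, Nat.card_eq_fintype_card, cardZ]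
      unfold prb
      rw [hcard, cardΩ]
      push_cast
      field_simp
  -- the main computation, for an arbitrary predicate cutting out part of the component
  have main : ∀ (P : V → Prop)
      (inst2 : Fintype (({w : V // P w} → (Fin L → ZMod p)) × (Fin L → ZMod p))),
      (∀ w, P w → Q.connectedComponentMk w = C) → P v₀ →
      @entp p ((Fin L → ZMod p) × (Fin LZ → ZMod p)) _ _ inst2
        (fun ω => ((fun x : {w : V // P w} => φ x.1 ω.1 ω.2), ω.1)) = (L : ℝ) + L := by
    intro P inst2 hPC hPv₀
    rw [entp_const' p _ (((p:ℝ) ^ L * (p:ℝ) ^ L)⁻¹) ?_]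
    · rw [Real.logb_inv, neg_neg, Real.logb_mul (hppow L) (hppow L), hlogb]
    · rintro ⟨t, s⟩
      have hali : ∀ (x : {w : V // P w}) (z z' : Fin LZ → ZMod p),
          φ v₀ s z = φ v₀ s z' → φ x.1 s z = φ x.1 s z' :=
        fun x z z' h => halignC x.1 (hPC x.1 x.2) s z z' h
      set m := Nat.card {z : Fin LZ → ZMod p // φ v₀ s z = fun _ => 0} with hm
      have hmeq : m * p ^ L = p ^ LZ := hcnt₀ s _
      have hcnt : ∀ a, Nat.card {z : Fin LZ → ZMod p // φ v₀ s z = a} = m := by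
        intro a
        have h1 := hcnt₀ s a
        exact Nat.eq_of_mul_eq_mul_right (pow_pos hp.pos L) (by rw [h1, hmeq])
      have hfib := tuple_fiber' (fun (x : {w : V // P w}) (z : Fin LZ → ZMod p) => φ x.1 s z)
        ⟨v₀, hPv₀⟩ m hali hcnt t
      have hprb : prb (fun ω : (Fin L → ZMod p) × (Fin LZ → ZMod p) =>
          ((fun x : {w : V // P w} => φ x.1 ω.1 ω.2), ω.1)) (t, s)
          = (Nat.card {z : Fin LZ → ZMod p //
              (fun x : {w : V // P w} => φ x.1 s z) = t} : ℝ) / ((p:ℝ) ^ L * (p:ℝ) ^ LZ) := by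
        unfold prb
        congr 1
        · norm_cast
          exact card_pair' (fun s z => (fun x : {w : V // P w} => φ x.1 s z)) s t
        · rw [cardΩ]; push_cast; ring
      rcases hfib with h0 | hm'
      · left
        have h0' : Nat.card {z : Fin LZ → ZMod p //
            (fun x : {w : V // P w} => φ x.1 s z) = t} = 0 := h0
        rw [hprb, h0']
        simp
      · right
        have hm'' : Nat.card {z : Fin LZ → ZMod p //
            (fun x : {w : V // P w} => φ x.1 s z) = t} = m := hm'
        rw [hprb, hm'']
        have hmr : (m : ℝ) * (p:ℝ) ^ L = (p:ℝ) ^ LZ := by exact_mod_cast hmeq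
        field_simp
        linear_combination hmr
  constructor
  · rw [hSent, sub_eq_iff_eq_add]
    have h := main (fun w => w ∈ Vq) inferInstance (fun w hw => hsub w hw) hv₀Vq
    refine ((entp_inst_irrel p _ _ _).trans h).trans (by push_cast; ring)
  · rw [hSent, sub_eq_iff_eq_add]
    have h := main (fun w => Q.connectedComponentMk w = C) inferInstance (fun w hw => hw) hv₀C
    refine ((entp_inst_irrel p _ _ _).trans h).trans (by push_cast; ring)
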